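/- For every n ≥ 0, the number of walks of length n constrained to the upper half-plane (all positions satisfy y ≥ 0) that end at the point (δ_n, 0), where δ_n is the remainder of n modulo 2, equals the sum over l = 0, 1, …, ⌊n/2⌋ of (1/(l+1)) · n! / (l! · l! · (⌊n/2⌋ − l)! · (⌈n/2⌉ − l)!). -/

import Mathlib

/-- A walk of length `n` with unit steps N, S, E, W. -/
def IsWalk {n : ℕ} (w : Fin n → ℤ × ℤ) : Prop :=
  ∀ l, w l = (0, 1) ∨ w l = (0, -1) ∨ w l = (1, 0) ∨ w l = (-1, 0)

/-- Position of the walk `w` after `a` steps. -/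
def pos {n : ℕ} (w : Fin n → ℤ × ℤ) (a : ℕ) : ℤ × ℤ :=
  ∑ l ∈ Finset.univ.filter (fun l : Fin n => (l : ℕ) < a), w l

open Finset

namespace Walk15

def bval (b : Bool) : ℤ := if b then 1 else -1

def bps {m : ℕ} (g : Fin m → Bool) (c : ℕ) : ℤ :=
  ∑ c' ∈ Finset.univ.filter (fun c' : Fin m => (c' : ℕ) < c), bval (g c')

def BalP {m : ℕ} (g : Fin m → Bool) : Prop :=
  (∀ c ≤ m, 0 ≤ bps g c) ∧ bps g m = 0

def ds (b : Bool) : DyckStep := if b then .U else .D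

def dval : DyckStep → ℤ
  | .U => 1
  | .D => -1

lemma dval_ds (b : Bool) : dval (ds b) = bval b := by cases b <;> rfl

lemma list_sum (L : List DyckStep) :
    (L.map dval).sum = (L.count DyckStep.U : ℤ) - L.count DyckStep.D := by
  induction L with
  | nil => simp
  | cons a L ih => cases a <;> simp [List.count_cons, dval, ih] <;> ring

lemma bps_count {m : ℕ} {L : List DyckStep} (g : Fin m → Bool)
    (hL : L = List.ofFn fun i => ds (g i)) (c : ℕ) :
    bps g c = ((L.take c).count DyckStep.U : ℤ) - (L.take c).count DyckStep.D := by
  rw [← list_sum, hL, List.map_take, List.map_ofFn, List.sum_take_ofFn]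
  simp [bps, Function.comp, dval_ds]

lemma balp_iff {m : ℕ} {L : List DyckStep} (g : Fin m → Bool)
    (hL : L = List.ofFn fun i => ds (g i)) :
    BalP g ↔ (L.count DyckStep.U = L.count DyckStep.D ∧
      ∀ i, (L.take i).count DyckStep.D ≤ (L.take i).count DyckStep.U) := by
  have hlen : L.length = m := by rw [hL]; simp
  have htm : L.take m = L := List.take_of_length_le (by omega)
  constructor
  · rintro ⟨h1, h2⟩
    rw [bps_count g hL, htm] at h2
    refine ⟨by omega, fun i => ?_⟩
    rcases le_or_gt i m with hi | hi
    · have := h1 i hi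
      rw [bps_count g hL] at this
      omega
    · rw [List.take_of_length_le (by omega)]
      omega
  · rintro ⟨h1, h2⟩
    constructor
    · intro c _
      rw [bps_count g hL]
      have := h2 c
      omega
    · rw [bps_count g hL, htm]
      omega

def balEquiv (m : ℕ) :
    {g : Fin m → Bool // BalP g} ≃ {p : DyckWord // p.toList.length = m} where
  toFun g :=
    have h := (balp_iff g.1 rfl).1 g.2
    ⟨⟨List.ofFn fun i => ds (g.1 i), h.1, h.2⟩, by simp⟩
  invFun p := ⟨fun i => decide (p.1.toList[(i : ℕ)]'(by rw [p.2]; exact i.isLt) = DyckStep.U), by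
    rw [balp_iff _ (L := p.1.toList) ?hofn]
    case hofn =>
      apply List.ext_getElem (by simp [p.2])
      intro k h1 h2
      simp only [List.getElem_ofFn]
      have hk : k < p.1.toList.length := by first | exact h1 | (rw [p.2]; simpa using h1)
      rcases (p.1.toList[k]'hk).dichotomy with h | h <;> simp [h, ds]
    exact ⟨p.1.count_U_eq_count_D, p.1.count_D_le_count_U⟩⟩
  left_inv g := by
    ext i
    simp only [List.getElem_ofFn]
    rcases hb : g.1 i with _ | _ <;> simp [hb, ds]
  right_inv p := by
    ext1
    ext1
    apply List.ext_getElem (by simp [p.2])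
    intro k h1 h2
    simp only [List.getElem_ofFn]
    have hk : k < p.1.toList.length := by first | exact h1 | (rw [p.2]; simpa using h1)
    rcases (p.1.toList[k]'hk).dichotomy with h | h <;> simp [h, ds]

lemma card_bal (m : ℕ) :
    Nat.card {g : Fin m → Bool // BalP g} =
      if 2 ∣ m then catalan (m / 2) else 0 := by
  rw [Nat.card_congr (balEquiv m)]
  split_ifs with h
  · obtain ⟨l, rfl⟩ := h
    have e2 : {p : DyckWord // p.toList.length = 2 * l} ≃
        {p : DyckWord // p.semilength = l} :=
      Equiv.subtypeEquivRight fun p => by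
        rw [← p.two_mul_semilength_eq_length]; omega
    rw [Nat.card_congr e2, Nat.card_eq_fintype_card,
      DyckWord.card_dyckWord_semilength_eq_catalan]
    congr 1
    omega
  · have : IsEmpty {p : DyckWord // p.toList.length = m} := by
      refine ⟨fun p => h ⟨p.1.semilength, ?_⟩⟩
      have h1 := p.1.two_mul_semilength_eq_length
      have h2 := p.2
      omega
    simp




lemma bps_all {m : ℕ} (g : Fin m → Bool) : bps g m = ∑ c, bval (g c) := by
  unfold bps
  congr 1
  rw [Finset.filter_true_of_mem]
  exact fun c _ => c.isLt

def psum {n : ℕ} (v : Fin 4 → ℤ) (f : Fin n → Fin 4) (a : ℕ) : ℤ :=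
  ∑ i ∈ Finset.univ.filter (fun i : Fin n => (i : ℕ) < a), v (f i)

variable {n : ℕ} (s : Finset (Fin n))

/-- number of elements of `s` that are `< a` -/
def cnt (a : ℕ) : ℕ :=
  #(univ.filter fun c : Fin s.card => ((s.orderEmbOfFin rfl c : Fin n) : ℕ) < a)

lemma cnt_le (a : ℕ) : cnt s a ≤ s.card := by
  refine le_trans (card_filter_le _ _) ?_
  simp

lemma cnt_of_ge {a : ℕ} (ha : n ≤ a) : cnt s a = s.card := by
  unfold cnt
  rw [Finset.filter_true_of_mem (fun c _ => lt_of_lt_of_le (s.orderEmbOfFin rfl c).isLt ha)]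
  simp

lemma seg (a : ℕ) (c : Fin s.card) :
    ((s.orderEmbOfFin rfl c : Fin n) : ℕ) < a ↔ (c : ℕ) < cnt s a := by
  have e := s.orderEmbOfFin rfl
  constructor
  · intro h
    have hsub : Finset.Iic c ⊆ univ.filter fun c' : Fin s.card => ((s.orderEmbOfFin rfl c' : Fin n) : ℕ) < a := by
      intro c' hc'
      simp only [Finset.mem_Iic] at hc'
      simp only [Finset.mem_filter, Finset.mem_univ, true_and]
      have h1 : s.orderEmbOfFin rfl c' ≤ s.orderEmbOfFin rfl c := (s.orderEmbOfFin rfl).le_iff_le.2 hc'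
      rw [Fin.le_def] at h1
      omega
    have := Finset.card_le_card hsub
    rw [Fin.card_Iic] at this
    unfold cnt
    omega
  · intro h
    by_contra hc
    push_neg at hc
    have hsub : (univ.filter fun c' : Fin s.card => ((s.orderEmbOfFin rfl c' : Fin n) : ℕ) < a) ⊆ Finset.Iio c := by
      intro c' hc'
      simp only [Finset.mem_filter, Finset.mem_univ, true_and] at hc'
      rw [Finset.mem_Iio]
      by_contra hcc
      push_neg at hcc
      have h1 : s.orderEmbOfFin rfl c ≤ s.orderEmbOfFin rfl c' := (s.orderEmbOfFin rfl).le_iff_le.2 hcc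
      rw [Fin.le_def] at h1
      omega
    have := Finset.card_le_card hsub
    rw [Fin.card_Iio] at this
    unfold cnt at h
    omega

lemma cnt_emb (c : Fin s.card) : cnt s ((s.orderEmbOfFin rfl c : Fin n) : ℕ) = (c : ℕ) := by
  unfold cnt
  have : (univ.filter fun c' : Fin s.card =>
      ((s.orderEmbOfFin rfl c' : Fin n) : ℕ) < ((s.orderEmbOfFin rfl c : Fin n) : ℕ)) =
      Finset.Iio c := by
    ext c'
    simp only [Finset.mem_filter, Finset.mem_univ, true_and, Finset.mem_Iio]
    rw [← Fin.lt_def, (s.orderEmbOfFin rfl).lt_iff_lt]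
  rw [this, Fin.card_Iio]

lemma emb_symm (x : {y // y ∈ s}) :
    (s.orderEmbOfFin rfl) ((s.orderIsoOfFin rfl).symm x) = (x : Fin n) := by
  rw [← Finset.coe_orderIsoOfFin_apply, OrderIso.apply_symm_apply]

lemma symm_emb (c : Fin s.card) :
    (s.orderIsoOfFin rfl).symm ⟨s.orderEmbOfFin rfl c, s.orderEmbOfFin_mem rfl c⟩ = c := by
  rw [OrderIso.symm_apply_eq]
  ext
  rw [Finset.coe_orderIsoOfFin_apply]

lemma transfer (v : Fin 4 → ℤ) (f : Fin n → Fin 4) (g : Fin s.card → Bool)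
    (h0 : ∀ i ∉ s, v (f i) = 0)
    (hg : ∀ c, bval (g c) = v (f (s.orderEmbOfFin rfl c)))
    (a : ℕ) : psum v f a = bps g (cnt s a) := by
  unfold psum bps
  rw [← Finset.sum_subset (Finset.filter_subset_filter _ (Finset.subset_univ s))]
  swap
  · intro i hi hni
    simp only [Finset.mem_filter] at hi hni
    exact h0 i (fun hmem => hni ⟨hmem, hi.2⟩)
  refine Finset.sum_bij'
    (i := fun i hi => (s.orderIsoOfFin rfl).symm ⟨i, (Finset.mem_filter.1 hi).1⟩)
    (j := fun c _ => (s.orderEmbOfFin rfl c : Fin n)) ?_ ?_ ?_ ?_ ?_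
  · intro i hi
    simp only [Finset.mem_filter, Finset.mem_univ, true_and] at hi ⊢
    rw [← seg s a, emb_symm]
    exact hi.2
  · intro c hc
    simp only [Finset.mem_filter, Finset.mem_univ, true_and] at hc ⊢
    exact ⟨s.orderEmbOfFin_mem rfl c, (seg s a c).2 hc⟩
  · intro i hi
    exact emb_symm s _
  · intro c hc
    exact symm_emb s c
  · intro i hi
    rw [hg]
    congr 2
    exact (emb_symm s ⟨i, (Finset.mem_filter.1 hi).1⟩).symm



def HorP {m : ℕ} (t : ℤ) (h : Fin m → Bool) : Prop := (∑ c, bval (h c)) = t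

lemma sum_bval {m : ℕ} (h : Fin m → Bool) :
    (∑ c, bval (h c)) = 2 * (#(univ.filter fun c => h c = true) : ℤ) - m := by
  unfold bval
  rw [Finset.sum_ite, Finset.sum_const, Finset.sum_const]
  have hcc := Finset.card_filter_add_card_filter_not (s := (univ : Finset (Fin m)))
    (p := fun c => h c = true)
  simp only [Finset.card_univ, Fintype.card_fin] at hcc
  simp only [nsmul_eq_mul, mul_one, mul_neg]
  have h3 : #(univ.filter fun c => h c = true) ≤ m := by omega
  have h4 : (#(univ.filter fun x => ¬ h x = true) : ℤ)
      = (m : ℤ) - #(univ.filter fun c => h c = true) := by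
    omega
  rw [h4]
  ring

lemma card_hor (m : ℕ) (t : ℤ) (k : ℕ) (hk : (m : ℤ) + t = 2 * k) :
    Nat.card {h : Fin m → Bool // HorP t h} = m.choose k := by
  have e1 : {h : Fin m → Bool // HorP t h} ≃ {u : Finset (Fin m) // #u = k} := by
    refine ⟨fun h => ⟨univ.filter fun c => h.1 c = true, ?_⟩,
      fun u => ⟨fun c => decide (c ∈ u.1), ?_⟩, ?_, ?_⟩
    · have := h.2
      unfold HorP at this
      rw [sum_bval] at this
      omega
    · unfold HorP
      rw [sum_bval]
      have : (univ.filter fun c => decide (c ∈ u.1) = true) = u.1 := by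
        ext c; simp
      rw [this, u.2]
      omega
    · intro h
      ext c
      simp
    · intro u
      ext c
      simp
  rw [Nat.card_congr e1, Nat.card_eq_fintype_card, Fintype.card_finset_len, Fintype.card_fin]


def xv : Fin 4 → ℤ := ![0, 0, 1, -1]
def yv : Fin 4 → ℤ := ![1, -1, 0, 0]

lemma fin4 (v : Fin 4) : v = 0 ∨ v = 1 ∨ v = 2 ∨ v = 3 := by fin_cases v <;> simp

def WP (n : ℕ) (f : Fin n → Fin 4) : Prop :=
  (∀ a ≤ n, 0 ≤ psum yv f a) ∧ psum xv f n = (n : ℤ) % 2 ∧ psum yv f n = 0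

def vmem {n : ℕ} (f : Fin n → Fin 4) : Finset (Fin n) :=
  univ.filter fun i => f i = 0 ∨ f i = 1

variable {n : ℕ} (s : Finset (Fin n))

def mk (g : Fin s.card → Bool) (h : Fin sᶜ.card → Bool) (i : Fin n) : Fin 4 :=
  if hi : i ∈ s then (if g ((s.orderIsoOfFin rfl).symm ⟨i, hi⟩) then 0 else 1)
  else (if h ((sᶜ.orderIsoOfFin rfl).symm ⟨i, Finset.mem_compl.2 hi⟩) then 2 else 3)

lemma mk_emb (g : Fin s.card → Bool) (h : Fin sᶜ.card → Bool) (c : Fin s.card) :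
    mk s g h (s.orderEmbOfFin rfl c) = if g c then 0 else 1 := by
  have hm := s.orderEmbOfFin_mem rfl c
  rw [mk, dif_pos hm, symm_emb]

lemma mk_embc (g : Fin s.card → Bool) (h : Fin sᶜ.card → Bool) (c : Fin sᶜ.card) :
    mk s g h (sᶜ.orderEmbOfFin rfl c) = if h c then 2 else 3 := by
  have hm := sᶜ.orderEmbOfFin_mem rfl c
  have hns : (sᶜ.orderEmbOfFin rfl c) ∉ s := Finset.mem_compl.1 hm
  rw [mk, dif_neg hns, symm_emb]

lemma vmem_mk (g : Fin s.card → Bool) (h : Fin sᶜ.card → Bool) : vmem (mk s g h) = s := by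
  ext i
  simp only [vmem, mem_filter, mem_univ, true_and]
  by_cases hi : i ∈ s
  · simp only [hi, iff_true]
    have hd : mk s g h i = if g ((s.orderIsoOfFin rfl).symm ⟨i, hi⟩) then 0 else 1 := dif_pos hi
    rw [hd]
    cases hb : g ((s.orderIsoOfFin rfl).symm ⟨i, hi⟩) <;> simp
  · simp only [hi, iff_false]
    have hd : mk s g h i
        = if h ((sᶜ.orderIsoOfFin rfl).symm ⟨i, Finset.mem_compl.2 hi⟩) then 2 else 3 :=
      dif_neg hi
    rw [hd]
    cases hb : h ((sᶜ.orderIsoOfFin rfl).symm ⟨i, Finset.mem_compl.2 hi⟩) <;> simp <;> decide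

lemma y_transfer (g : Fin s.card → Bool) (h : Fin sᶜ.card → Bool) (a : ℕ) :
    psum yv (mk s g h) a = bps g (cnt s a) := by
  refine transfer s yv _ g ?_ ?_ a
  · intro i hi
    rw [mk, dif_neg hi]
    split <;> rfl
  · intro c
    rw [mk_emb]
    cases hb : g c <;> simp [hb, bval, yv]

lemma x_transfer (g : Fin s.card → Bool) (h : Fin sᶜ.card → Bool) :
    psum xv (mk s g h) n = ∑ c, bval (h c) := by
  have htr : psum xv (mk s g h) n = bps h (cnt sᶜ n) := by
    refine transfer sᶜ xv _ h ?_ ?_ n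
    · intro i hi
      rw [Finset.mem_compl, not_not] at hi
      have hd : mk s g h i = if g ((s.orderIsoOfFin rfl).symm ⟨i, hi⟩) then 0 else 1 := dif_pos hi
      rw [hd]
      split <;> rfl
    · intro c
      rw [mk_embc]
      cases hb : h c <;> simp [hb, bval, xv]
  rw [cnt_of_ge sᶜ (le_refl n)] at htr
  rw [htr, bps_all]

lemma WP_mk (g : Fin s.card → Bool) (h : Fin sᶜ.card → Bool)
    (hg : BalP g) (hh : HorP ((n : ℤ) % 2) h) : WP n (mk s g h) := by
  refine ⟨fun a _ => ?_, ?_, ?_⟩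
  · rw [y_transfer]
    exact hg.1 _ (cnt_le s a)
  · rw [x_transfer]
    exact hh
  · rw [y_transfer, cnt_of_ge s (le_refl n)]
    exact hg.2

def fiberMap : {g : Fin s.card → Bool // BalP g} × {h : Fin sᶜ.card → Bool // HorP ((n : ℤ) % 2) h}
    → {f : Fin n → Fin 4 // WP n f ∧ vmem f = s} :=
  fun p => ⟨mk s p.1.1 p.2.1, WP_mk s _ _ p.1.2 p.2.2, vmem_mk s _ _⟩

lemma fiberMap_bij : Function.Bijective (fiberMap s) := by
  constructor
  · rintro ⟨⟨g1, hg1⟩, ⟨h1, hh1⟩⟩ ⟨⟨g2, hg2⟩, ⟨h2, hh2⟩⟩ hp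
    have key : mk s g1 h1 = mk s g2 h2 := congrArg Subtype.val hp
    have hgeq : g1 = g2 := by
      funext c
      have := congrFun key (s.orderEmbOfFin rfl c)
      rw [mk_emb, mk_emb] at this
      cases b1 : g1 c <;> cases b2 : g2 c <;> simp [b1, b2] at this ⊢ <;>
        exact absurd this (by decide)
    have hheq : h1 = h2 := by
      funext c
      have := congrFun key (sᶜ.orderEmbOfFin rfl c)
      rw [mk_embc, mk_embc] at this
      cases b1 : h1 c <;> cases b2 : h2 c <;> simp [b1, b2] at this ⊢ <;>
        exact absurd this (by decide)
    subst hgeq hheq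
    rfl
  · rintro ⟨f, hWP, hv⟩
    have hmem : ∀ i, i ∈ s ↔ (f i = 0 ∨ f i = 1) := by
      intro i
      rw [← hv, vmem, mem_filter]
      simp
    set g : Fin s.card → Bool := fun c => decide (f (s.orderEmbOfFin rfl c) = 0) with hgdef
    set h : Fin sᶜ.card → Bool := fun c => decide (f (sᶜ.orderEmbOfFin rfl c) = 2) with hhdef
    have hmk : mk s g h = f := by
      funext i
      by_cases hi : i ∈ s
      · rw [mk, dif_pos hi]
        have he : s.orderEmbOfFin rfl ((s.orderIsoOfFin rfl).symm ⟨i, hi⟩) = i := emb_symm s _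
        rcases (hmem i).1 hi with h0 | h0 <;> simp [hgdef, he, h0]
      · rw [mk, dif_neg hi]
        have he : sᶜ.orderEmbOfFin rfl ((sᶜ.orderIsoOfFin rfl).symm ⟨i, Finset.mem_compl.2 hi⟩)
            = i := emb_symm sᶜ _
        have h4 := fin4 (f i)
        have hno : ¬ (f i = 0 ∨ f i = 1) := fun hc => hi ((hmem i).2 hc)
        push_neg at hno
        rcases h4 with h0 | h0 | h0 | h0 <;> first
          | (exact absurd h0 hno.1) | (exact absurd h0 hno.2)
          | simp [hhdef, he, h0]
    have hy0 : ∀ i ∉ s, yv (f i) = 0 := by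
      intro i hi
      have hno : ¬ (f i = 0 ∨ f i = 1) := fun hc => hi ((hmem i).2 hc)
      push_neg at hno
      rcases fin4 (f i) with h0 | h0 | h0 | h0 <;>
        first
          | (exact absurd h0 hno.1) | (exact absurd h0 hno.2)
          | simp [h0, yv]
    have hgy : ∀ c, bval (g c) = yv (f (s.orderEmbOfFin rfl c)) := by
      intro c
      have := (hmem _).1 (s.orderEmbOfFin_mem rfl c)
      rcases this with h0 | h0 <;> simp [hgdef, h0, bval, yv]
    have hytr : ∀ a, psum yv f a = bps g (cnt s a) := transfer s yv f g hy0 hgy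
    have hx0 : ∀ i ∉ sᶜ, xv (f i) = 0 := by
      intro i hi
      rw [Finset.mem_compl, not_not] at hi
      rcases (hmem i).1 hi with h0 | h0 <;> simp [h0, xv]
    have hhx : ∀ c, bval (h c) = xv (f (sᶜ.orderEmbOfFin rfl c)) := by
      intro c
      have hmc := sᶜ.orderEmbOfFin_mem rfl c
      rw [Finset.mem_compl] at hmc
      have hno : ¬ (f (sᶜ.orderEmbOfFin rfl c) = 0 ∨ f (sᶜ.orderEmbOfFin rfl c) = 1) :=
        fun hc => hmc ((hmem _).2 hc)
      push_neg at hno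
      rcases fin4 (f (sᶜ.orderEmbOfFin rfl c)) with h0 | h0 | h0 | h0 <;>
        first
          | (exact absurd h0 hno.1) | (exact absurd h0 hno.2)
          | simp [hhdef, h0, bval, xv]
    have hxtr : psum xv f n = bps h (cnt sᶜ n) := transfer sᶜ xv f h hx0 hhx n
    refine ⟨⟨⟨g, ?_, ?_⟩, ⟨h, ?_⟩⟩, ?_⟩
    · intro c hc
      rcases eq_or_lt_of_le hc with hceq | hclt
      · subst hceq
        have h5 := hytr n
        rw [cnt_of_ge s (le_refl n)] at h5
        rw [← h5]
        exact hWP.1 n (le_refl n)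
      · have hcfin : c = ((⟨c, hclt⟩ : Fin s.card) : ℕ) := rfl
        rw [hcfin, ← cnt_emb s ⟨c, hclt⟩, ← hytr]
        exact hWP.1 _ (le_of_lt (s.orderEmbOfFin rfl ⟨c, hclt⟩).isLt)
    · have h5 := hytr n
      rw [cnt_of_ge s (le_refl n)] at h5
      rw [← h5]
      exact hWP.2.2
    · unfold HorP
      rw [cnt_of_ge sᶜ (le_refl n)] at hxtr
      rw [bps_all] at hxtr
      rw [← hxtr]
      exact hWP.2.1
    · exact Subtype.ext hmk

lemma card_fiber :
    Nat.card {f : Fin n → Fin 4 // WP n f ∧ vmem f = s} =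
      if 2 ∣ s.card then
        catalan (s.card / 2) * ((n - s.card).choose ((n + 1) / 2 - s.card / 2))
      else 0 := by
  rw [← Nat.card_congr (Equiv.ofBijective _ (fiberMap_bij s)), Nat.card_prod, card_bal]
  have hsn : s.card ≤ n := by
    have := Finset.card_le_univ s
    simpa using this
  have hcompl : sᶜ.card = n - s.card := by
    rw [Finset.card_compl, Fintype.card_fin]
  split_ifs with h2
  · obtain ⟨l, hl⟩ := h2
    rw [card_hor sᶜ.card ((n : ℤ) % 2) ((n + 1) / 2 - s.card / 2) (by rw [hcompl]; omega), hcompl]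
  · rw [zero_mul]

def G (n m : ℕ) : ℕ :=
  if 2 ∣ m then catalan (m / 2) * ((n - m).choose ((n + 1) / 2 - m / 2)) else 0

lemma main_count (n : ℕ) :
    Nat.card {f : Fin n → Fin 4 // WP n f} =
      ∑ l ∈ Finset.range (n / 2 + 1),
        n.choose (2 * l) * (catalan l * ((n - 2 * l).choose ((n + 1) / 2 - l))) := by
  classical
  rw [Nat.card_eq_fintype_card, Fintype.card_subtype]
  rw [Finset.card_eq_sum_card_fiberwise (f := fun f => vmem f)
    (t := (univ : Finset (Finset (Fin n)))) (fun x _ => mem_univ _)]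
  have hterm : ∀ s : Finset (Fin n),
      #((univ.filter fun f => WP n f).filter fun f => vmem f = s) = G n s.card := by
    intro s
    rw [Finset.filter_filter]
    have := card_fiber s
    rw [Nat.card_eq_fintype_card, Fintype.card_subtype] at this
    unfold G
    exact this
  rw [Finset.sum_congr rfl fun s _ => hterm s]
  rw [← Finset.powerset_univ, Finset.sum_powerset]
  have hcardu : #(univ : Finset (Fin n)) = n := by simp
  rw [hcardu]
  have hinner : ∀ j, (∑ t ∈ Finset.powersetCard j (univ : Finset (Fin n)), G n (#t))
      = n.choose j * G n j := by
    intro j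
    rw [Finset.sum_congr rfl fun t ht => by
      rw [(Finset.mem_powersetCard.1 ht).2]]
    rw [Finset.sum_const, smul_eq_mul, Finset.card_powersetCard, hcardu]
  rw [Finset.sum_congr rfl fun j _ => hinner j]
  have hsplit : ∀ j, n.choose j * G n j =
      if 2 ∣ j then n.choose j * (catalan (j / 2) * ((n - j).choose ((n + 1) / 2 - j / 2)))
      else 0 := by
    intro j
    unfold G
    split_ifs <;> ring
  rw [Finset.sum_congr rfl fun j _ => hsplit j, ← Finset.sum_filter]
  refine Finset.sum_bij' (i := fun j _ => j / 2) (j := fun l _ => 2 * l) ?_ ?_ ?_ ?_ ?_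
  · intro j hj
    simp only [Finset.mem_filter, Finset.mem_range] at hj ⊢
    omega
  · intro l hl
    simp only [Finset.mem_filter, Finset.mem_range] at hl ⊢
    omega
  · intro j hj
    simp only [Finset.mem_filter, Finset.mem_range] at hj
    beta_reduce
    omega
  · intro l _
    beta_reduce
    omega
  · intro j hj
    simp only [Finset.mem_filter, Finset.mem_range] at hj
    obtain ⟨-, l, rfl⟩ := hj
    beta_reduce
    rw [Nat.mul_div_cancel_left l (by norm_num)]

def st : Fin 4 → ℤ × ℤ := ![(0, 1), (0, -1), (1, 0), (-1, 0)]

lemma st_eq (k : Fin 4) : st k = (xv k, yv k) := by fin_cases k <;> rfl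

lemma pos_st {n : ℕ} (f : Fin n → Fin 4) (a : ℕ) :
    pos (fun i => st (f i)) a = (psum xv f a, psum yv f a) := by
  unfold pos psum
  rw [Finset.sum_congr rfl fun i _ => st_eq (f i)]
  ext <;> simp [Prod.fst_sum, Prod.snd_sum]

def stInv : ℤ × ℤ → Fin 4 := fun p =>
  if p = (0, 1) then 0 else if p = (0, -1) then 1 else if p = (1, 0) then 2 else 3

lemma st_stInv {n : ℕ} (w : Fin n → ℤ × ℤ) (hw : IsWalk w) (l : Fin n) :
    st (stInv (w l)) = w l := by
  rcases hw l with h | h | h | h <;> rw [h] <;> norm_num [stInv, st, Prod.ext_iff, Matrix.cons_val_two, Matrix.cons_val_three, Matrix.vecHead, Matrix.vecTail]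

def walkEquiv (n : ℕ) : {f : Fin n → Fin 4 // WP n f} ≃
    {w : Fin n → ℤ × ℤ //
      IsWalk w ∧ (∀ a ≤ n, 0 ≤ (pos w a).2) ∧ pos w n = ((n : ℤ) % 2, 0)} where
  toFun f := ⟨fun i => st (f.1 i), by
    intro l
    rcases fin4 (f.1 l) with h | h | h | h <;> simp only [] <;> rw [h] <;> norm_num [st, Matrix.cons_val_two, Matrix.cons_val_three, Matrix.vecHead, Matrix.vecTail], by
    intro a _
    rw [pos_st]
    exact f.2.1 a (by assumption), by
    rw [pos_st, Prod.ext_iff]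
    exact ⟨f.2.2.1, f.2.2.2⟩⟩
  invFun w := ⟨fun i => stInv (w.1 i), by
    have hst : (fun i => st (stInv (w.1 i))) = w.1 := funext (st_stInv w.1 w.2.1)
    have hpos : ∀ a, pos w.1 a = (psum xv (fun i => stInv (w.1 i)) a,
        psum yv (fun i => stInv (w.1 i)) a) := by
      intro a
      rw [← pos_st (fun i => stInv (w.1 i)) a]
      congr 1
      exact hst.symm
    refine ⟨fun a ha => ?_, ?_, ?_⟩
    · have := w.2.2.1 a ha
      rw [hpos a] at this
      exact this
    · have := w.2.2.2
      rw [hpos n, Prod.ext_iff] at this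
      exact this.1
    · have := w.2.2.2
      rw [hpos n, Prod.ext_iff] at this
      exact this.2⟩
  left_inv f := by
    apply Subtype.ext
    funext i
    rcases fin4 (f.1 i) with h | h | h | h <;> simp only [] <;> rw [h] <;> norm_num [st, stInv, Prod.ext_iff, Matrix.cons_val_two, Matrix.cons_val_three, Matrix.vecHead, Matrix.vecTail]
  right_inv w := Subtype.ext (funext (st_stInv w.1 w.2.1))

lemma arith (n l : ℕ) (hl : l ≤ n / 2) :
    ((n.choose (2 * l) * (catalan l * ((n - 2 * l).choose ((n + 1) / 2 - l))) : ℕ) : ℚ) =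
      (1 / ((l : ℚ) + 1)) * (Nat.factorial n) /
        ((Nat.factorial l) * (Nat.factorial l) *
          (Nat.factorial (n / 2 - l)) * (Nat.factorial ((n + 1) / 2 - l))) := by
  have h2l : 2 * l ≤ n := by omega
  set a := n / 2 - l with ha
  set b := (n + 1) / 2 - l with hb
  have hab : n - 2 * l = a + b := by omega
  have h1 := Nat.choose_mul_factorial_mul_factorial h2l
  have h2 := Nat.choose_mul_factorial_mul_factorial (show l ≤ 2 * l by omega)
  rw [show 2 * l - l = l by omega] at h2
  have h3 := Nat.choose_mul_factorial_mul_factorial (Nat.le_add_left b a)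
  rw [show (a + b) - b = a by omega] at h3
  have h4 : (l + 1) * catalan l = (2 * l).choose l := by
    rw [succ_mul_catalan_eq_centralBinom, Nat.centralBinom_eq_two_mul_choose]
  rw [hab] at h1 ⊢
  have hq1 : (n.choose (2 * l) : ℚ) * (2 * l).factorial * (a + b).factorial = n.factorial := by
    exact_mod_cast congrArg (Nat.cast : ℕ → ℚ) h1
  have hq2 : ((2 * l).choose l : ℚ) * l.factorial * l.factorial = (2 * l).factorial := by
    exact_mod_cast congrArg (Nat.cast : ℕ → ℚ) h2
  have hq3 : ((a + b).choose b : ℚ) * b.factorial * a.factorial = (a + b).factorial := by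
    exact_mod_cast congrArg (Nat.cast : ℕ → ℚ) h3
  have hcat : (catalan l : ℚ) = ((2 * l).choose l : ℚ) / ((l : ℚ) + 1) := by
    rw [eq_div_iff (by positivity)]
    have := congrArg (Nat.cast : ℕ → ℚ) h4
    push_cast at this
    linarith
  push_cast
  rw [hcat]
  have hkey : (n.choose (2 * l) : ℚ) * ((2 * l).choose l) * ((a + b).choose b) *
      ((l.factorial : ℚ) * l.factorial * a.factorial * b.factorial) = n.factorial := by
    rw [← hq1, ← hq2, ← hq3]
    ring
  field_simp
  linear_combination hkey

end Walk15

theorem stmt15 (n : ℕ) :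
    (Nat.card {w : Fin n → ℤ × ℤ //
      IsWalk w ∧ (∀ a ≤ n, 0 ≤ (pos w a).2) ∧ pos w n = ((n : ℤ) % 2, 0)} : ℚ) =
    ∑ l ∈ Finset.range (n / 2 + 1),
      (1 / ((l : ℚ) + 1)) * (Nat.factorial n) /
        ((Nat.factorial l) * (Nat.factorial l) *
          (Nat.factorial (n / 2 - l)) * (Nat.factorial ((n + 1) / 2 - l))) := by
  have hcard := Nat.card_congr (Walk15.walkEquiv n)
  rw [← hcard, Walk15.main_count n]
  push_cast
  refine Finset.sum_congr rfl fun l hl => ?_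
  have := Walk15.arith n l (by simpa using Nat.lt_succ_iff.mp (Finset.mem_range.1 hl))
  push_cast at this
  exact this
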